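/- Let K be a field, A_1,...,A_n finite nonempty subsets of K with |A_i| = d_i ≥ 2, and Y the projective closure of X* = A_1 × ... × A_n in P^n. Then the Castelnuovo–Mumford regularity (index of regularity) of S[u]/I(Y) equals Σ_{i=1}^{n}(d_i − 1), and the degree of S[u]/I(Y) equals d_1 ⋯ d_n. -/

import Mathlib

open Finset MvPolynomial

section aux
variable {K : Type*} [Field K] [DecidableEq K] {n : ℕ}

theorem lagrange_weight_sum (A : Finset K) (k : ℕ)
    (hk : k + 1 < A.card) :
    ∑ b ∈ A, (∏ c ∈ A.erase b, (b - c))⁻¹ * b ^ k = 0 := by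
  have hinj : Set.InjOn (id : K → K) A := Function.injective_id.injOn
  have hdeg : (Polynomial.X ^ k : Polynomial K).degree < A.card := by
    refine lt_of_le_of_lt (Polynomial.degree_X_pow_le k) ?_
    exact_mod_cast Nat.lt_of_succ_lt hk
  have heq := Lagrange.eq_interpolate hinj hdeg (f := (Polynomial.X ^ k : Polynomial K))
  have hcoeff := congrArg (fun p => Polynomial.coeff p (A.card - 1)) heq
  simp only [Lagrange.interpolate_apply, Polynomial.finset_sum_coeff,
    Polynomial.coeff_C_mul] at hcoeff
  rw [Polynomial.coeff_X_pow, if_neg (by omega), eq_comm] at hcoeff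
  rw [← hcoeff]
  refine Finset.sum_congr rfl fun b hb => ?_
  have hb' : (Lagrange.basis A id b).natDegree = A.card - 1 := Lagrange.natDegree_basis hinj hb
  have hlc : (Lagrange.basis A id b).coeff (A.card - 1) = (Lagrange.basis A id b).leadingCoeff := by
    rw [Polynomial.leadingCoeff, hb']
  have hbasis : (Lagrange.basis A id b).leadingCoeff = (∏ c ∈ A.erase b, (b - c))⁻¹ := by
    unfold Lagrange.basis
    rw [Polynomial.leadingCoeff_prod, ← Finset.prod_inv_distrib]
    refine Finset.prod_congr rfl fun c _ => ?_
    unfold Lagrange.basisDivisor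
    rw [Polynomial.leadingCoeff_mul, Polynomial.leadingCoeff_C,
      Polynomial.leadingCoeff_X_sub_C, mul_one]
    rfl
  rw [hlc, hbasis]
  simp [mul_comm]

theorem phi_eval_zero (A : Fin n → Finset K) (hA : ∀ i, 2 ≤ (A i).card)
    (f : MvPolynomial (Fin (n + 1)) K)
    (hf : f.IsHomogeneous (∑ i, ((A i).card - 1) - 1))
    (hS : 1 ≤ ∑ i, ((A i).card - 1)) :
    ∑ γ ∈ Fintype.piFinset A,
      (∏ i, (∏ c ∈ (A i).erase (γ i), (γ i - c))⁻¹) * MvPolynomial.eval (Fin.snoc γ 1) f = 0 := by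
  set S := ∑ i, ((A i).card - 1) with hSdef
  have hstep : ∀ γ : Fin n → K,
      (∏ i, (∏ c ∈ (A i).erase (γ i), (γ i - c))⁻¹) * MvPolynomial.eval (Fin.snoc γ 1) f =
      ∑ α ∈ f.support, (∏ i, (∏ c ∈ (A i).erase (γ i), (γ i - c))⁻¹) *
        MvPolynomial.eval (Fin.snoc γ 1) ((MvPolynomial.monomial α) (MvPolynomial.coeff α f)) := by
    intro γ
    conv_lhs => rw [f.as_sum]
    rw [map_sum, Finset.mul_sum]
  rw [Finset.sum_congr rfl fun γ _ => hstep γ]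
  rw [Finset.sum_comm]
  refine Finset.sum_eq_zero fun α hα => ?_
  have hdeg : ∑ j, α j = S - 1 := by
    have h1 := hf (MvPolynomial.mem_support_iff.mp hα)
    rw [← h1]
    simp [Finsupp.weight_apply, Finsupp.sum_fintype]
  -- find an index with small exponent
  have hex : ∃ i : Fin n, α i.castSucc + 1 < (A i).card := by
    by_contra hcon
    push_neg at hcon
    have hle : ∀ i : Fin n, (A i).card - 1 ≤ α i.castSucc := fun i => by
      have := hcon i; omega
    have h2 : S ≤ ∑ i : Fin n, α i.castSucc := Finset.sum_le_sum fun i _ => hle i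
    have h3 : ∑ i : Fin n, α i.castSucc ≤ ∑ j, α j := by
      rw [Fin.sum_univ_castSucc]; omega
    omega
  obtain ⟨i0, hi0⟩ := hex
  -- rewrite each evaluation of the monomial
  have hev : ∀ γ : Fin n → K,
      (∏ i, (∏ c ∈ (A i).erase (γ i), (γ i - c))⁻¹) *
        MvPolynomial.eval (Fin.snoc γ 1) ((MvPolynomial.monomial α) (MvPolynomial.coeff α f)) =
      MvPolynomial.coeff α f *
        ∏ i, ((∏ c ∈ (A i).erase (γ i), (γ i - c))⁻¹ * (γ i) ^ (α i.castSucc)) := by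
    intro γ
    rw [MvPolynomial.eval_monomial]
    rw [Finsupp.prod_fintype]
    swap
    · intro; simp
    rw [Fin.prod_univ_castSucc]
    simp only [Fin.snoc_castSucc, Fin.snoc_last, one_pow, mul_one]
    rw [Finset.prod_mul_distrib]
    ring
  rw [Finset.sum_congr rfl fun γ _ => hev γ, ← Finset.mul_sum]
  have hps := Finset.prod_univ_sum (fun i => A i)
    (fun i b => (∏ c ∈ (A i).erase b, (b - c))⁻¹ * b ^ (α i.castSucc))
  rw [← hps, Finset.prod_eq_zero (Finset.mem_univ i0)]
  · ring
  · exact lagrange_weight_sum (A i0) _ hi0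

theorem delta_exists (A : Fin n → Finset K) (hA : ∀ i, 2 ≤ (A i).card) (d : ℕ)
    (hd : ∑ i, ((A i).card - 1) ≤ d) (a : Fin n → K) (ha : ∀ i, a i ∈ A i) :
    ∃ f ∈ MvPolynomial.homogeneousSubmodule (Fin (n + 1)) K d,
      ∀ γ : Fin n → K, (∀ i, γ i ∈ A i) →
        MvPolynomial.eval (Fin.snoc γ 1) f = if γ = a then 1 else 0 := by
  set S := ∑ i, ((A i).card - 1) with hSdef
  set e : K := ∏ i, ∏ b ∈ (A i).erase (a i), (a i - b) with hedef
  have he : e ≠ 0 := by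
    rw [hedef]
    refine Finset.prod_ne_zero_iff.mpr fun i _ => Finset.prod_ne_zero_iff.mpr fun b hb => ?_
    exact sub_ne_zero.mpr (Finset.ne_of_mem_erase hb).symm
  set P : MvPolynomial (Fin (n + 1)) K :=
    (X (Fin.last n)) ^ (d - S) *
      ∏ i : Fin n, ∏ b ∈ (A i).erase (a i), (X i.castSucc - C b * X (Fin.last n)) with hPdef
  refine ⟨C e⁻¹ * P, ?_, ?_⟩
  · rw [MvPolynomial.mem_homogeneousSubmodule]
    have h1 : P.IsHomogeneous d := by
      have hprod : (∏ i : Fin n, ∏ b ∈ (A i).erase (a i),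
          (X i.castSucc - C b * X (Fin.last n) : MvPolynomial (Fin (n + 1)) K)).IsHomogeneous S := by
        have : S = ∑ i : Fin n, ((A i).card - 1) := rfl
        rw [this]
        refine MvPolynomial.IsHomogeneous.prod _ _ _ fun i _ => ?_
        have hcard : (A i).card - 1 = ∑ _b ∈ (A i).erase (a i), 1 := by
          rw [Finset.sum_const, smul_eq_mul, mul_one, Finset.card_erase_of_mem (ha i)]
        rw [hcard]
        refine MvPolynomial.IsHomogeneous.prod _ _ _ fun b _ => ?_
        exact (MvPolynomial.isHomogeneous_X _ _).sub (MvPolynomial.isHomogeneous_C_mul_X _ _)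
      have := ((MvPolynomial.isHomogeneous_X K (Fin.last n)).pow (d - S)).mul hprod
      rw [one_mul] at this
      have hds : d - S + S = d := Nat.sub_add_cancel hd
      rwa [hds] at this
    simpa using h1.C_mul e⁻¹
  · intro γ hγ
    have hevP : MvPolynomial.eval (Fin.snoc γ 1) P =
        ∏ i : Fin n, ∏ b ∈ (A i).erase (a i), (γ i - b) := by
      rw [hPdef]
      simp only [map_mul, map_pow, map_prod, map_sub, MvPolynomial.eval_X,
        MvPolynomial.eval_C, Fin.snoc_castSucc, Fin.snoc_last, one_pow, mul_one, one_mul]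
    rw [map_mul, MvPolynomial.eval_C, hevP]
    by_cases hgam : γ = a
    · subst hgam
      rw [if_pos rfl, ← hedef, inv_mul_cancel₀ he]
    · rw [if_neg hgam]
      obtain ⟨i, hi⟩ : ∃ i, γ i ≠ a i := by
        by_contra hcon; push_neg at hcon; exact hgam (funext hcon)
      rw [Finset.prod_eq_zero (Finset.mem_univ i), mul_zero]
      refine Finset.prod_eq_zero (Finset.mem_erase.mpr ⟨hi, hγ i⟩) ?_
      exact sub_self _

end aux
set_option maxHeartbeats 1600000 in
theorem stmt_14 {K : Type*} [Field K] (n : ℕ) (A : Fin n → Finset K)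
    (hA : ∀ i, 2 ≤ (A i).card)
    (I : Ideal (MvPolynomial (Fin (n + 1)) K))
    (hI : I = Ideal.span {f : MvPolynomial (Fin (n + 1)) K |
        (∃ m, f.IsHomogeneous m) ∧
          ∀ γ : Fin n → K, (∀ i, γ i ∈ A i) →
            MvPolynomial.eval (Fin.snoc γ (1 : K)) f = 0}) :
    IsLeast
      {r : ℕ | ∀ d : ℕ, r ≤ d →
        Module.finrank K
            ((MvPolynomial.homogeneousSubmodule (Fin (n + 1)) K d).map
              (Ideal.Quotient.mkₐ K I).toLinearMap) =
          ∏ i, (A i).card}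
      (∑ i, ((A i).card - 1)) := by
  classical
  set S := ∑ i, ((A i).card - 1) with hSdef
  set G := { x // x ∈ Fintype.piFinset A } with hGdef
  -- the evaluation linear map in degree d
  set L2 : ∀ d : ℕ, (MvPolynomial.homogeneousSubmodule (Fin (n + 1)) K d) →ₗ[K] (G → K) :=
    fun d => LinearMap.pi fun γ : G =>
      (MvPolynomial.aeval (Fin.snoc (γ.1 : Fin n → K) (1 : K))).toLinearMap.comp
        (Submodule.subtype _) with hL2def
  have hL2apply : ∀ (d : ℕ) (f : MvPolynomial.homogeneousSubmodule (Fin (n + 1)) K d) (γ : G),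
      L2 d f γ = MvPolynomial.eval (Fin.snoc (γ.1 : Fin n → K) (1 : K)) f.1 := by
    intro d f γ
    have h1 : L2 d f γ = MvPolynomial.aeval (Fin.snoc (γ.1 : Fin n → K) (1 : K)) f.1 := rfl
    rw [h1, ← MvPolynomial.coe_aeval_eq_eval]
    rfl
  -- key rank identity
  have hkey : ∀ d : ℕ,
      Module.finrank K
        ((MvPolynomial.homogeneousSubmodule (Fin (n + 1)) K d).map
          (Ideal.Quotient.mkₐ K I).toLinearMap) =
      Module.finrank K (LinearMap.range (L2 d)) := by
    intro d
    set V := MvPolynomial.homogeneousSubmodule (Fin (n + 1)) K d with hVdef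
    set L1 : V →ₗ[K] (MvPolynomial (Fin (n + 1)) K ⧸ I) :=
      (Ideal.Quotient.mkₐ K I).toLinearMap.comp V.subtype with hL1def
    have hrange : V.map (Ideal.Quotient.mkₐ K I).toLinearMap = LinearMap.range L1 := by
      rw [hL1def, LinearMap.range_comp, Submodule.range_subtype]
    have hker : LinearMap.ker L1 = LinearMap.ker (L2 d) := by
      ext f
      simp only [LinearMap.mem_ker]
      constructor
      · intro h0 
        have hfI : (f : MvPolynomial (Fin (n + 1)) K) ∈ I := by
          have : Ideal.Quotient.mk I (f : MvPolynomial (Fin (n + 1)) K) = 0 := h0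
          exact (Ideal.Quotient.eq_zero_iff_mem).mp this
        funext γ
        have hsub : I ≤ RingHom.ker (MvPolynomial.eval (Fin.snoc (γ.1 : Fin n → K) (1 : K))) := by
          rw [hI, Ideal.span_le]
          intro g hg
          exact hg.2 γ.1 (Fintype.mem_piFinset.mp γ.2)
        have := hsub hfI
        rw [hL2apply]
        exact this
      · intro h0
        have hvanish : ∀ γ : Fin n → K, (∀ i, γ i ∈ A i) →
            MvPolynomial.eval (Fin.snoc γ (1 : K)) (f : MvPolynomial (Fin (n + 1)) K) = 0 := by
          intro γ hγ
          have hγ' : γ ∈ Fintype.piFinset A := Fintype.mem_piFinset.mpr hγ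
          have := congrFun h0 ⟨γ, hγ'⟩
          rw [hL2apply] at this
          exact this
        have hfI : (f : MvPolynomial (Fin (n + 1)) K) ∈ I := by
          rw [hI]
          exact Ideal.subset_span ⟨⟨d, f.2⟩, hvanish⟩
        exact (Ideal.Quotient.eq_zero_iff_mem).mpr hfI
    rw [hrange]
    rw [(LinearMap.quotKerEquivRange L1).symm.finrank_eq, hker,
      (LinearMap.quotKerEquivRange (L2 d)).finrank_eq]
  -- upper part : surjectivity for d ≥ S
  have hsurj : ∀ d : ℕ, S ≤ d → LinearMap.range (L2 d) = ⊤ := by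
    intro d hd
    rw [eq_top_iff]
    intro F _
    have hsingle : ∀ a : G, Pi.single a (1 : K) ∈ LinearMap.range (L2 d) := by
      intro a
      obtain ⟨f, hfV, hfev⟩ := delta_exists A hA d hd a.1 (Fintype.mem_piFinset.mp a.2)
      refine ⟨⟨f, hfV⟩, ?_⟩
      funext γ
      rw [hL2apply]
      rw [hfev γ.1 (Fintype.mem_piFinset.mp γ.2)]
      rw [Pi.single_apply]
      by_cases h : γ = a
      · rw [if_pos h, if_pos (by rw [h])]
      · rw [if_neg h, if_neg (fun hh => h (Subtype.ext hh))]
    have hFsum : ∑ a : G, Pi.single a (F a) = F := Finset.univ_sum_single F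
    rw [← hFsum]
    refine Submodule.sum_mem _ fun a _ => ?_
    have hsm : (Pi.single a (F a) : G → K) = F a • (Pi.single a (1 : K) : G → K) := by
      funext γ
      simp [Pi.single_apply, mul_ite]
    rw [hsm]
    exact Submodule.smul_mem _ _ (hsingle a)
  have hcardG : Fintype.card G = ∏ i, (A i).card := by
    rw [show Fintype.card G = (Fintype.piFinset A).card from Fintype.card_coe _,
      Fintype.card_piFinset]
  -- lower part : non-surjectivity at S - 1
  have hlow : 1 ≤ S → Module.finrank K (LinearMap.range (L2 (S - 1))) ≠ ∏ i, (A i).card := by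
    intro hS
    have hne : LinearMap.range (L2 (S - 1)) ≠ ⊤ := by
      intro htop
      have hanon : ∀ i, (A i).Nonempty := fun i => Finset.card_pos.mp (by have := hA i; omega)
      have hGnon : (Fintype.piFinset A).Nonempty := by
        rw [Fintype.piFinset_nonempty]; exact hanon
      obtain ⟨a0, ha0⟩ := hGnon
      set a : G := ⟨a0, ha0⟩ with hadef
      have hmem : Pi.single a (1 : K) ∈ LinearMap.range (L2 (S - 1)) := htop ▸ Submodule.mem_top
      obtain ⟨f, hf⟩ := hmem
      -- apply the functional
      have hzero := phi_eval_zero A hA f.1 ((MvPolynomial.mem_homogeneousSubmodule _ _).mp f.2) hS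
      have hval : ∀ γ ∈ Fintype.piFinset A,
          (∏ i, (∏ c ∈ (A i).erase (γ i), (γ i - c))⁻¹) *
            MvPolynomial.eval (Fin.snoc γ 1) f.1 =
          (∏ i, (∏ c ∈ (A i).erase (γ i), (γ i - c))⁻¹) * (if γ = a0 then 1 else 0) := by
        intro γ hγ
        congr 1
        have := congrFun hf ⟨γ, hγ⟩
        rw [hL2apply] at this
        rw [this, Pi.single_apply]
        by_cases h : γ = a0
        · rw [if_pos (Subtype.ext h), if_pos h]
        · rw [if_neg (fun hh => h (congrArg Subtype.val hh)), if_neg h]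
      rw [Finset.sum_congr rfl hval] at hzero
      rw [Finset.sum_eq_single a0] at hzero
      · rw [if_pos rfl, mul_one] at hzero
        have hcne : (∏ i, (∏ c ∈ (A i).erase (a0 i), (a0 i - c))⁻¹) ≠ 0 := by
          refine Finset.prod_ne_zero_iff.mpr fun i _ => ?_
          refine inv_ne_zero (Finset.prod_ne_zero_iff.mpr fun c hc => ?_)
          exact sub_ne_zero.mpr (Finset.ne_of_mem_erase hc).symm
        exact hcne hzero
      · intro b _ hb
        rw [if_neg hb, mul_zero]
      · intro h; exact absurd ha0 h
    have hlt : Module.finrank K (LinearMap.range (L2 (S - 1))) < Module.finrank K (G → K) :=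
      Submodule.finrank_lt hne
    rw [Module.finrank_fintype_fun_eq_card, hcardG] at hlt
    omega
  constructor
  · intro d hd
    rw [hkey d, hsurj d hd, finrank_top, Module.finrank_fintype_fun_eq_card, hcardG]
  · intro r hr
    by_contra hcon
    push_neg at hcon
    have hS1 : 1 ≤ S := by omega
    have := hr (S - 1) (by omega)
    rw [hkey (S - 1)] at this
    exact hlow hS1 this
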